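/- Conversely, if G acts completely reducibly on V and N ◁ G is a normal subgroup, then N acts completely reducibly on V (Clifford's theorem, semisimplicity part). -/

import Mathlib

noncomputable section CliffordAux

open Representation

namespace CliffordProof

variable {k : Type*} [Field k] {G : Type*} [Group G]
  {V : Type*} [AddCommGroup V] [Module k V]

instance asModuleTower {H : Type*} [Monoid H] (ρ' : Representation k H V) :
    IsScalarTower k (MonoidAlgebra k H) ρ'.asModule :=
  ⟨fun c r x => by
    show ρ'.asAlgebraHom (c • r) x = c • ρ'.asAlgebraHom r x
    rw [map_smul]; rfl⟩

/-- Conjugation by `g` as an algebra automorphism of `MonoidAlgebra k N`. -/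
def conjAlgEquiv (N : Subgroup G) [N.Normal] (g : G) :
    MonoidAlgebra k N ≃ₐ[k] MonoidAlgebra k N :=
  MonoidAlgebra.domCongr k k (MulAut.conjNormal g)

theorem conj_asAlgebraHom (ρ : Representation k G V) (N : Subgroup G) [N.Normal]
    (g : G) (r : MonoidAlgebra k N) (x : V) :
    ρ g (Representation.asAlgebraHom (ρ.comp N.subtype) r x) =
      Representation.asAlgebraHom (ρ.comp N.subtype) (conjAlgEquiv N g r) (ρ g x) := by
  induction r using MonoidAlgebra.induction_on with
  | of n =>
      rw [Representation.asAlgebraHom_of]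
      rw [show conjAlgEquiv N g (MonoidAlgebra.of k (↥N) n)
            = MonoidAlgebra.of k (↥N) (MulAut.conjNormal g n) by
        simp [conjAlgEquiv, MonoidAlgebra.of_apply]]
      rw [Representation.asAlgebraHom_of]
      show ρ g ((ρ (N.subtype n)) x) = ρ (N.subtype (MulAut.conjNormal g n)) (ρ g x)
      rw [← Module.End.mul_apply, ← map_mul, ← Module.End.mul_apply, ← map_mul]
      congr 2
      simp [Subgroup.coe_subtype, MulAut.conjNormal_apply, mul_assoc]
  | add f₁ f₂ h₁ h₂ => simp [map_add, h₁, h₂]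
  | smul c f h => simp [map_smul, h]

variable (ρ : Representation k G V) (N : Subgroup G) [N.Normal]

/-- The image of an `N`-submodule under `ρ g`, again an `N`-submodule by normality. -/
def conjSubmodule (g : G)
    (p : Submodule (MonoidAlgebra k N) (Representation.asModule (ρ.comp N.subtype))) :
    Submodule (MonoidAlgebra k N) (Representation.asModule (ρ.comp N.subtype)) where
  carrier := ρ g '' (p : Set (Representation.asModule (ρ.comp N.subtype)))
  zero_mem' := ⟨0, p.zero_mem, map_zero _⟩
  add_mem' := by
    rintro x y ⟨u, hu, rfl⟩ ⟨w, hw, rfl⟩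
    exact ⟨u + w, p.add_mem hu hw, map_add _ _ _⟩
  smul_mem' := by
    rintro r x ⟨u, hu, rfl⟩
    refine ⟨(conjAlgEquiv N g).symm r •
      (show Representation.asModule (ρ.comp N.subtype) from u), p.smul_mem _ hu, ?_⟩
    show ρ g (Representation.asAlgebraHom (ρ.comp N.subtype) ((conjAlgEquiv N g).symm r) u)
        = Representation.asAlgebraHom (ρ.comp N.subtype) r (ρ g u)
    rw [conj_asAlgebraHom, AlgEquiv.apply_symm_apply]

theorem mem_conjSubmodule {g : G}
    {p : Submodule (MonoidAlgebra k N) (Representation.asModule (ρ.comp N.subtype))}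
    {x : Representation.asModule (ρ.comp N.subtype)} :
    x ∈ conjSubmodule ρ N g p ↔ ∃ u ∈ p, ρ g u = x := Iff.rfl

theorem ρ_inv_cancel (g : G) (v : V) : ρ g⁻¹ (ρ g v) = v := by
  rw [← Module.End.mul_apply, ← map_mul, inv_mul_cancel, map_one, Module.End.one_apply]

theorem conjSubmodule_conjSubmodule (g : G)
    (p : Submodule (MonoidAlgebra k N) (Representation.asModule (ρ.comp N.subtype))) :
    conjSubmodule ρ N g⁻¹ (conjSubmodule ρ N g p) = p := by
  ext x
  constructor
  · rintro ⟨u, ⟨w, hw, rfl⟩, rfl⟩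
    simp only [ρ_inv_cancel ρ g w]
    exact hw
  · intro hx
    exact ⟨ρ g x, ⟨x, hx, rfl⟩, ρ_inv_cancel ρ g x⟩

theorem conjSubmodule_mono (g : G)
    {p q : Submodule (MonoidAlgebra k N) (Representation.asModule (ρ.comp N.subtype))}
    (h : p ≤ q) : conjSubmodule ρ N g p ≤ conjSubmodule ρ N g q := by
  rintro x ⟨u, hu, rfl⟩
  exact ⟨u, h hu, rfl⟩

/-- `conjSubmodule` as an order isomorphism of the lattice of `N`-submodules. -/
def conjOrderIso (g : G) :
    Submodule (MonoidAlgebra k N) (Representation.asModule (ρ.comp N.subtype)) ≃o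
      Submodule (MonoidAlgebra k N) (Representation.asModule (ρ.comp N.subtype)) where
  toFun := conjSubmodule ρ N g
  invFun := conjSubmodule ρ N g⁻¹
  left_inv p := conjSubmodule_conjSubmodule ρ N g p
  right_inv p := by
    have := conjSubmodule_conjSubmodule ρ N g⁻¹ p
    rwa [inv_inv] at this
  map_rel_iff' := by
    intro p q
    constructor
    · intro h
      have h' : conjSubmodule ρ N g p ≤ conjSubmodule ρ N g q := h
      have := conjSubmodule_mono ρ N g⁻¹ h'
      rwa [conjSubmodule_conjSubmodule, conjSubmodule_conjSubmodule] at this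
    · exact conjSubmodule_mono ρ N g

end CliffordProof

end CliffordAux
noncomputable section CliffordAux2

namespace CliffordProof

variable {k : Type*} [Field k] {G : Type*} [Group G]
  {V : Type*} [AddCommGroup V] [Module k V]
  (ρ : Representation k G V) (N : Subgroup G) [N.Normal]

theorem conj_sSup_atoms_le (g : G) :
    conjSubmodule ρ N g (sSup {m | IsAtom m}) ≤ sSup {m | IsAtom m} := by
  have h : conjSubmodule ρ N g (sSup {m | IsAtom m})
      = conjOrderIso ρ N g (sSup {m | IsAtom m}) := rfl
  rw [h, OrderIso.map_sSup]
  exact iSup₂_le fun m hm => le_sSup (((conjOrderIso ρ N g).isAtom_iff m).mpr hm)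

/-- A `G`-stable `N`-submodule, viewed as a `MonoidAlgebra k G`-submodule. -/
def extendToG (p : Submodule (MonoidAlgebra k N)
      (Representation.asModule (ρ.comp N.subtype : Representation k N V)))
    (hstab : ∀ (g : G) v, v ∈ p →
      (show Representation.asModule (ρ.comp N.subtype : Representation k N V)
        from ρ g (show V from v)) ∈ p) :
    Submodule (MonoidAlgebra k G) ρ.asModule where
  carrier := {x : ρ.asModule | x ∈ p}
  zero_mem' := p.zero_mem
  add_mem' h1 h2 := p.add_mem h1 h2
  smul_mem' := by
    intro a v hv
    induction a using MonoidAlgebra.induction_on with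
    | of g =>
        show (ρ.asAlgebraHom (MonoidAlgebra.of k G g)) v ∈ p
        rw [Representation.asAlgebraHom_of]
        exact hstab g v hv
    | add f₁ f₂ h₁ h₂ =>
        have : ((f₁ + f₂) • v : ρ.asModule) = f₁ • v + f₂ • v := add_smul _ _ _
        rw [this]
        exact p.add_mem h₁ h₂
    | smul c f h =>
        have h1 : ((c • f) • v : ρ.asModule) = c • (f • v) := smul_assoc _ _ _
        have h2 : c • (show Representation.asModule (ρ.comp N.subtype : Representation k N V)
                from (f • v : ρ.asModule))
            = (algebraMap k (MonoidAlgebra k N) c) •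
              (show Representation.asModule (ρ.comp N.subtype : Representation k N V)
                from (f • v : ρ.asModule)) :=
          (algebraMap_smul (MonoidAlgebra k N) c _).symm
        rw [h1]
        show c • (show Representation.asModule (ρ.comp N.subtype : Representation k N V)
                from (f • v : ρ.asModule)) ∈ p
        rw [h2]
        exact p.smul_mem _ h

theorem mem_extendToG {p hstab}
    {x : Representation.asModule (ρ.comp N.subtype : Representation k N V)} :
    (show ρ.asModule from x) ∈ extendToG ρ N p hstab ↔ x ∈ p := Iff.rfl

/-- A `G`-submodule, viewed as an `N`-submodule. -/
def restrictToN (q : Submodule (MonoidAlgebra k G) ρ.asModule) :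
    Submodule (MonoidAlgebra k N)
      (Representation.asModule (ρ.comp N.subtype : Representation k N V)) where
  carrier := {x : Representation.asModule (ρ.comp N.subtype : Representation k N V) | x ∈ q}
  zero_mem' := q.zero_mem
  add_mem' h1 h2 := q.add_mem h1 h2
  smul_mem' := by
    intro r v hv
    induction r using MonoidAlgebra.induction_on with
    | of n =>
        show (Representation.asAlgebraHom (ρ.comp N.subtype)
          (MonoidAlgebra.of k (↥N) n)) v ∈ q
        rw [Representation.asAlgebraHom_of]
        have h0 := q.smul_mem (MonoidAlgebra.of k G (n : G)) hv
        have heq : (MonoidAlgebra.of k G (n : G)) • (show ρ.asModule from v)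
            = ((ρ.comp N.subtype) n) (show V from v) := by
          show (ρ.asAlgebraHom (MonoidAlgebra.of k G (n : G))) v = _
          rw [Representation.asAlgebraHom_of]
          rfl
        rwa [heq] at h0
    | add f₁ f₂ h₁ h₂ =>
        have : ((f₁ + f₂) • v :
            Representation.asModule (ρ.comp N.subtype : Representation k N V))
            = f₁ • v + f₂ • v := add_smul _ _ _
        rw [this]
        exact q.add_mem h₁ h₂
    | smul c f h =>
        have h1 : ((c • f) • v :
            Representation.asModule (ρ.comp N.subtype : Representation k N V))
            = c • (f • v) := smul_assoc _ _ _
        have h2 : c • (show ρ.asModule from (f • v :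
                Representation.asModule (ρ.comp N.subtype : Representation k N V)))
            = (algebraMap k (MonoidAlgebra k G) c) •
              (show ρ.asModule from (f • v :
                Representation.asModule (ρ.comp N.subtype : Representation k N V))) :=
          (algebraMap_smul (MonoidAlgebra k G) c _).symm
        rw [h1]
        show c • (show ρ.asModule from (f • v :
            Representation.asModule (ρ.comp N.subtype : Representation k N V))) ∈ q
        rw [h2]
        exact q.smul_mem _ h

theorem mem_restrictToN {q : Submodule (MonoidAlgebra k G) ρ.asModule}
    {x : ρ.asModule} :
    (show Representation.asModule (ρ.comp N.subtype : Representation k N V) from x)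
      ∈ restrictToN ρ N q ↔ x ∈ q := Iff.rfl

end CliffordProof

end CliffordAux2
/-- Clifford's theorem (semisimplicity part): if `G` acts completely reducibly
on `V` and `N` is a normal subgroup of `G`, then `N` acts completely reducibly
on `V`. -/
theorem semisimple_restrict_normal
    {k : Type*} [Field k] {G : Type*} [Group G]
    {V : Type*} [AddCommGroup V] [Module k V] [FiniteDimensional k V]
    (ρ : Representation k G V)
    (N : Subgroup G) [N.Normal]
    (hG : IsSemisimpleModule (MonoidAlgebra k G) ρ.asModule) :
    IsSemisimpleModule (MonoidAlgebra k N) (Representation.asModule (ρ.comp N.subtype : Representation k N V)) := by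
  classical
  haveI : IsArtinian k V := isArtinian_of_fg_of_artinian'
  haveI hart : IsArtinian (MonoidAlgebra k N)
      (Representation.asModule (ρ.comp N.subtype : Representation k N V)) :=
    isArtinian_of_tower k (inferInstanceAs (IsArtinian k V))
  by_cases hS : (sSup {m : Submodule (MonoidAlgebra k N)
      (Representation.asModule (ρ.comp N.subtype : Representation k N V)) | IsAtom m}) = ⊤
  · apply IsSemisimpleModule.of_sSup_simples_eq_top
    have h : {m : Submodule (MonoidAlgebra k N)
        (Representation.asModule (ρ.comp N.subtype : Representation k N V)) |
        IsSimpleModule (MonoidAlgebra k N) m} = {m | IsAtom m} :=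
      Set.ext fun m => isSimpleModule_iff_isAtom
    rw [h]
    exact hS
  · exfalso
    set S : Submodule (MonoidAlgebra k N)
        (Representation.asModule (ρ.comp N.subtype : Representation k N V)) :=
      sSup {m | IsAtom m} with hSdef
    have hstab : ∀ (g : G) v, v ∈ S →
        (show Representation.asModule (ρ.comp N.subtype : Representation k N V)
          from ρ g (show V from v)) ∈ S := by
      intro g v hv
      exact CliffordProof.conj_sSup_atoms_le ρ N g ⟨v, hv, rfl⟩
    set S' : Submodule (MonoidAlgebra k G) ρ.asModule :=
      CliffordProof.extendToG ρ N S hstab with hS'def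
    have hS'top : S' ≠ ⊤ := by
      intro h
      apply hS
      rw [eq_top_iff]
      intro x _
      have hx : (show ρ.asModule from x) ∈ S' := h ▸ Submodule.mem_top
      exact (CliffordProof.mem_extendToG ρ N).mp hx
    haveI := hG
    obtain ⟨T', hT'⟩ := exists_isCompl S'
    have hT'bot : T' ≠ ⊥ := by
      rintro rfl
      apply hS'top
      rw [← hT'.sup_eq_top, sup_bot_eq]
    set T : Submodule (MonoidAlgebra k N)
        (Representation.asModule (ρ.comp N.subtype : Representation k N V)) :=
      CliffordProof.restrictToN ρ N T' with hTdef
    have hTbot : T ≠ ⊥ := by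
      intro h
      apply hT'bot
      rw [eq_bot_iff]
      intro x hx
      have hx' : (show Representation.asModule (ρ.comp N.subtype : Representation k N V)
          from x) ∈ T := (CliffordProof.mem_restrictToN ρ N).mpr hx
      rw [h] at hx'
      exact (Submodule.mem_bot _).mpr ((Submodule.mem_bot (R := MonoidAlgebra k N)
        (M := Representation.asModule (ρ.comp N.subtype : Representation k N V))).mp hx')
    rcases eq_bot_or_exists_atom_le T with h | ⟨a, ha, haT⟩
    · exact hTbot h
    · have haS : a ≤ S := le_sSup ha
      apply ha.1
      rw [eq_bot_iff]
      intro x hx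
      have hx1 : (show ρ.asModule from x) ∈ S' :=
        (CliffordProof.mem_extendToG ρ N).mpr (haS hx)
      have hx2 : (show ρ.asModule from x) ∈ T' :=
        (CliffordProof.mem_restrictToN ρ N).mp (haT hx)
      have hbot : (show ρ.asModule from x) ∈ (⊥ : Submodule (MonoidAlgebra k G) ρ.asModule) :=
        hT'.disjoint.le_bot (Submodule.mem_inf.mpr ⟨hx1, hx2⟩)
      have : (show ρ.asModule from x) = 0 := (Submodule.mem_bot _).mp hbot
      exact (Submodule.mem_bot _).mpr this
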